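/- In the standing setup, the linear span of the vectors {vec Ψ(W_i, W_j) : 1 ≤ i ≤ j ≤ d} equals the linear span of the vectors {vec Ψ(C_r, C_s) : 1 ≤ r < s ≤ d}. In particular, rank(Ω) equals the rank of the d₁²d₂² × d(d−1)/2 matrix D whose columns are vec Ψ(C_r, C_s) for 1 ≤ r < s ≤ d. -/

import Mathlib

open Matrix

/-- The flattening of the 4-way array `Ψ(D,F)`: the function on quadruples `(i,j,k,ℓ)` with
value `d_{i,k} f_{j,ℓ} + d_{j,ℓ} f_{i,k} − d_{i,ℓ} f_{j,k} − d_{j,k} f_{i,ℓ}`. -/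
def vecPsi {d₁ d₂ : ℕ} (D F : Matrix (Fin d₁) (Fin d₂) ℝ) :
    Fin d₁ × Fin d₁ × Fin d₂ × Fin d₂ → ℝ :=
  fun q => D q.1 q.2.2.1 * F q.2.1 q.2.2.2 + D q.2.1 q.2.2.2 * F q.1 q.2.2.1
    - D q.1 q.2.2.2 * F q.2.1 q.2.2.1 - D q.2.1 q.2.2.1 * F q.1 q.2.2.2

lemma vecPsi_symm {d₁ d₂ : ℕ} (D F : Matrix (Fin d₁) (Fin d₂) ℝ) :
    vecPsi D F = vecPsi F D := by
  funext q; simp only [vecPsi]; ring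

/-- `vecPsi` as a bilinear map. -/
def psiBil {d₁ d₂ : ℕ} : Matrix (Fin d₁) (Fin d₂) ℝ →ₗ[ℝ] Matrix (Fin d₁) (Fin d₂) ℝ →ₗ[ℝ]
    (Fin d₁ × Fin d₁ × Fin d₂ × Fin d₂ → ℝ) :=
  LinearMap.mk₂ ℝ vecPsi
    (fun D D' F => by
      funext q; simp [vecPsi, Matrix.add_apply]; ring)
    (fun c D F => by
      funext q; simp [vecPsi, Matrix.smul_apply, smul_eq_mul]; ring)
    (fun D F F' => by
      funext q; simp [vecPsi, Matrix.add_apply]; ring)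
    (fun c D F => by
      funext q; simp [vecPsi, Matrix.smul_apply, smul_eq_mul]; ring)

@[simp] lemma psiBil_apply {d₁ d₂ : ℕ} (D F : Matrix (Fin d₁) (Fin d₂) ℝ) :
    psiBil D F = vecPsi D F := rfl

lemma vecPsi_self {d₁ d₂ : ℕ} (a : Fin d₁ → ℝ) (b : Fin d₂ → ℝ) :
    vecPsi (vecMulVec a b) (vecMulVec a b) = 0 := by
  funext q; simp [vecPsi, vecMulVec_apply]; ring


lemma psiSum_mem {d₁ d₂ n : ℕ} (P : Submodule ℝ (Fin d₁ × Fin d₁ × Fin d₂ × Fin d₂ → ℝ))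
    (a b : Fin n → ℝ) (A B : Fin n → Matrix (Fin d₁) (Fin d₂) ℝ)
    (h : ∀ r s, vecPsi (A r) (B s) ∈ P) :
    vecPsi (∑ r, a r • A r) (∑ s, b s • B s) ∈ P := by
  rw [← psiBil_apply, map_sum]
  refine P.sum_mem fun s _ => ?_
  rw [_root_.map_smul]
  refine P.smul_mem _ ?_
  rw [map_sum, LinearMap.sum_apply]
  refine P.sum_mem fun r _ => ?_
  rw [_root_.map_smul, LinearMap.smul_apply]
  exact P.smul_mem _ (h r s)

theorem stmt6 (d d₁ d₂ : ℕ) (hd : 2 ≤ d) (hd₁ : 1 ≤ d₁) (hd₂ : 1 ≤ d₂)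
    (u : Fin d → Fin d₁ → ℝ) (v : Fin d → Fin d₂ → ℝ)
    (hu : ∀ ℓ, u ℓ ⬝ᵥ u ℓ = 1) (hv : ∀ ℓ, v ℓ ⬝ᵥ v ℓ = 1)
    (hli : LinearIndependent ℝ
      (fun ℓ : Fin d => fun pr : Fin d₂ × Fin d₁ => v ℓ pr.1 * u ℓ pr.2))
    (Θ : Matrix (Fin d) (Fin d) ℝ) (hΘ : IsUnit Θ.det)
    (W : Fin d → Matrix (Fin d₁) (Fin d₂) ℝ)
    (hW : ∀ ℓ, W ℓ = ∑ i, Θ⁻¹ i ℓ • Matrix.vecMulVec (u i) (v i))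
    (Ω : Matrix (Fin d₁ × Fin d₁ × Fin d₂ × Fin d₂) {pr : Fin d × Fin d // pr.1 ≤ pr.2} ℝ)
    (hΩ : ∀ idx pr, Ω idx pr = vecPsi (W pr.val.1) (W pr.val.2) idx) :
    Submodule.span ℝ (Set.range (fun pr : {pr : Fin d × Fin d // pr.1 ≤ pr.2} =>
        vecPsi (W pr.val.1) (W pr.val.2))) =
      Submodule.span ℝ (Set.range (fun pr : {pr : Fin d × Fin d // pr.1 < pr.2} =>
        vecPsi (Matrix.vecMulVec (u pr.val.1) (v pr.val.1))
          (Matrix.vecMulVec (u pr.val.2) (v pr.val.2)))) ∧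
    Ω.rank = (Matrix.of fun (idx : Fin d₁ × Fin d₁ × Fin d₂ × Fin d₂)
        (pr : {pr : Fin d × Fin d // pr.1 < pr.2}) =>
        vecPsi (Matrix.vecMulVec (u pr.val.1) (v pr.val.1))
          (Matrix.vecMulVec (u pr.val.2) (v pr.val.2)) idx).rank := by
  set C : Fin d → Matrix (Fin d₁) (Fin d₂) ℝ := fun i => Matrix.vecMulVec (u i) (v i) with hC
  -- C in terms of W
  have hCW : ∀ r, C r = ∑ ℓ, Θ ℓ r • W ℓ := by
    intro r
    have h1 : (∑ ℓ, Θ ℓ r • W ℓ) = ∑ i, (∑ ℓ, Θ⁻¹ i ℓ * Θ ℓ r) • C i := by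
      simp only [hW, hC, Finset.smul_sum, smul_smul, Finset.sum_smul]
      rw [Finset.sum_comm]
      simp [mul_comm]
    have h2 : ∀ i, (∑ ℓ, Θ⁻¹ i ℓ * Θ ℓ r) = if i = r then (1:ℝ) else 0 := by
      intro i
      have := Matrix.nonsing_inv_mul Θ hΘ
      have : (Θ⁻¹ * Θ) i r = (1 : Matrix (Fin d) (Fin d) ℝ) i r := by rw [this]
      simpa [Matrix.mul_apply, Matrix.one_apply] using this
    rw [h1]
    simp only [h2]
    rw [Finset.sum_eq_single r]
    · simp
    · intro i _ hi; simp [hi]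
    · intro h; simp at h
  -- the two spans
  set S := Submodule.span ℝ (Set.range (fun pr : {pr : Fin d × Fin d // pr.1 ≤ pr.2} =>
        vecPsi (W pr.val.1) (W pr.val.2)))
  set T := Submodule.span ℝ (Set.range (fun pr : {pr : Fin d × Fin d // pr.1 < pr.2} =>
        vecPsi (C pr.val.1) (C pr.val.2)))
  have hCT : ∀ r s : Fin d, vecPsi (C r) (C s) ∈ T := by
    intro r s
    rcases lt_trichotomy r s with h | h | h
    · exact Submodule.subset_span ⟨⟨(r, s), h⟩, rfl⟩
    · subst h; rw [hC]; rw [vecPsi_self]; exact T.zero_mem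
    · rw [vecPsi_symm]; exact Submodule.subset_span ⟨⟨(s, r), h⟩, rfl⟩
  have hWS : ∀ i j : Fin d, vecPsi (W i) (W j) ∈ S := by
    intro i j
    rcases le_total i j with h | h
    · exact Submodule.subset_span ⟨⟨(i, j), h⟩, rfl⟩
    · rw [vecPsi_symm]; exact Submodule.subset_span ⟨⟨(j, i), h⟩, rfl⟩
  have hST : S = T := by
    apply le_antisymm
    · rw [Submodule.span_le]
      rintro _ ⟨pr, rfl⟩
      show vecPsi (W pr.val.1) (W pr.val.2) ∈ T
      rw [hW pr.val.1, hW pr.val.2]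
      exact psiSum_mem T _ _ _ _ fun r s => hCT r s
    · rw [Submodule.span_le]
      rintro _ ⟨pr, rfl⟩
      show vecPsi (C pr.val.1) (C pr.val.2) ∈ S
      rw [hCW pr.val.1, hCW pr.val.2]
      exact psiSum_mem S _ _ _ _ fun r s => hWS r s
  refine ⟨hST, ?_⟩
  -- rank statement
  have hΩT : Ωᵀ = fun pr => vecPsi (W pr.val.1) (W pr.val.2) := by
    funext pr idx
    exact hΩ idx pr
  rw [Matrix.rank, Matrix.rank, Matrix.range_mulVecLin, Matrix.range_mulVecLin, Matrix.col, Matrix.col, hΩT]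
  have : (Matrix.of fun (idx : Fin d₁ × Fin d₁ × Fin d₂ × Fin d₂)
        (pr : {pr : Fin d × Fin d // pr.1 < pr.2}) =>
        vecPsi (Matrix.vecMulVec (u pr.val.1) (v pr.val.1))
          (Matrix.vecMulVec (u pr.val.2) (v pr.val.2)) idx)ᵀ
      = fun pr : {pr : Fin d × Fin d // pr.1 < pr.2} => vecPsi (C pr.val.1) (C pr.val.2) := by
    funext pr idx; rfl
  rw [this]
  show Module.finrank ℝ ↥S = Module.finrank ℝ ↥T
  rw [hST]
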